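/- Each of the three ordered sets T⁻, T⁺, and T = T⁺ ∪ T⁻, with the order induced from ℝ, is order-isomorphic to (ℤ, ≤). -/

import Mathlib

/-- `t_{(m,n)} = (n − βm)/(α − β)`, the coordinate of `(m,n)` along the direction `(1,α)`
in the basis `(1,α), (1,β)`. -/
noncomputable def tcoord (α β : ℝ) (m n : ℤ) : ℝ := ((n : ℝ) - β * m) / (α - β)

/-- `s_{(m,n)} = (αm − n)/(α − β)`, the coordinate of `(m,n)` along the direction `(1,β)`. -/
noncomputable def scoord (α β : ℝ) (m n : ℤ) : ℝ := (α * m - (n : ℝ)) / (α - β)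

/-- The parallelogram `R_{(m,n)}` with opposite vertices `(0,0)` and `(m,n)` whose sides are
parallel to `(1,α)` and `(1,β)`:
`{a·(1,α) + b·(1,β) : a between 0 and t_{(m,n)}, b between 0 and s_{(m,n)}}`. -/
def Rpar (α β : ℝ) (m n : ℤ) : Set (ℝ × ℝ) :=
  {p | ∃ a b : ℝ, a ∈ Set.uIcc 0 (tcoord α β m n) ∧ b ∈ Set.uIcc 0 (scoord α β m n) ∧
    p = (a + b, a * α + b * β)}

/-- The interior of the parallelogram `R_{(m,n)}` contains no point of `ℤ²`. -/
def NoLatticeInterior (α β : ℝ) (m n : ℤ) : Prop :=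
  ∀ p ∈ interior (Rpar α β m n), ¬ ∃ k l : ℤ, p = ((k : ℝ), (l : ℝ))

/-- `(p,q)` (with `q ≥ 1` and `p − qα < 0`) is a *good lower approximation of the second kind*
of `α`: `|p − qα| < |p′ − q′α|` for every `(p′,q′) ≠ (p,q)` with `1 ≤ q′ ≤ q` and
`p′ − q′α < 0`. -/
def GoodLower (α : ℝ) (p q : ℤ) : Prop :=
  1 ≤ q ∧ (p : ℝ) - q * α < 0 ∧
    ∀ p' q' : ℤ, (p', q') ≠ (p, q) → 1 ≤ q' → q' ≤ q → (p' : ℝ) - q' * α < 0 →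
      |(p : ℝ) - q * α| < |(p' : ℝ) - q' * α|

/-- `(p,q)` (with `q ≥ 1` and `p − qα > 0`) is a *good upper approximation of the second kind*
of `α`. -/
def GoodUpper (α : ℝ) (p q : ℤ) : Prop :=
  1 ≤ q ∧ 0 < (p : ℝ) - q * α ∧
    ∀ p' q' : ℤ, (p', q') ≠ (p, q) → 1 ≤ q' → q' ≤ q → 0 < (p' : ℝ) - q' * α →
      |(p : ℝ) - q * α| < |(p' : ℝ) - q' * α|

/-- `T⁻`: the set of values `t_{(m,n)} > 0` with `n − αm < 0` such that the interior of
`R_{(m,n)}` contains no point of `ℤ²`. -/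
def Tminus (α β : ℝ) : Set ℝ :=
  {t | ∃ m n : ℤ, t = tcoord α β m n ∧ 0 < t ∧ (n : ℝ) - α * m < 0 ∧
    NoLatticeInterior α β m n}

/-- `T⁺`: the set of values `t_{(m,n)} > 0` with `n − αm > 0` such that the interior of
`R_{(m,n)}` contains no point of `ℤ²`. -/
def Tplus (α β : ℝ) : Set ℝ :=
  {t | ∃ m n : ℤ, t = tcoord α β m n ∧ 0 < t ∧ 0 < (n : ℝ) - α * m ∧
    NoLatticeInterior α β m n}

/-- `T = T⁺ ∪ T⁻`. -/
def Tset (α β : ℝ) : Set ℝ := Tplus α β ∪ Tminus α β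

open Set

lemma quad_irrational {T : ℤ} {x : ℝ} (hx : x^2 - T*x + 1 = 0) (h1 : 1 < x) : Irrational x := by
  rintro ⟨q, rfl⟩
  have hq' : q^2 - (T:ℚ)*q + 1 = 0 := by exact_mod_cast hx
  set a : ℤ := q.num with ha
  set b : ℤ := (q.den : ℤ) with hb
  have hb0 : (0:ℤ) < b := by rw [hb]; exact_mod_cast q.pos
  have hbQ : (b:ℚ) ≠ 0 := by positivity
  have hqab : (q:ℚ) = (a:ℚ)/(b:ℚ) := by rw [ha, hb]; push_cast; exact (Rat.num_div_den q).symm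
  rw [hqab] at hq'; field_simp at hq'
  have key : a^2 - T*a*b + b^2 = 0 := by
    have h2 : ((a:ℚ)^2 - T*a*b + b^2) * b = 0 := by linear_combination (b:ℚ) * hq'
    have h3 : (a:ℚ)^2 - T*a*b + b^2 = 0 := (mul_eq_zero.mp h2).resolve_right hbQ
    exact_mod_cast h3
  have hcop : IsCoprime a b := by
    rw [Int.isCoprime_iff_gcd_eq_one]; exact q.reduced
  have hdvd : b ∣ a^2 := ⟨T*a - b, by linarith [key]⟩
  have hb1 : b = 1 := by
    have hu : IsUnit b := (hcop.symm.pow_right).isUnit_of_dvd' dvd_rfl hdvd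
    rcases Int.isUnit_iff.mp hu with h | h
    · exact h
    · omega
  have hqa : (q:ℚ) = (a:ℚ) := by rw [hqab, hb1]; simp
  have key2 : a^2 - T*a + 1 = 0 := by rw [hb1] at key; linarith
  have hadvd : a ∣ 1 := ⟨T - a, by ring_nf; linarith [key2]⟩
  have : a = 1 ∨ a = -1 := Int.isUnit_iff.mp (isUnit_of_dvd_one hadvd)
  have hxa : (1:ℝ) < (a:ℝ) := by rw [hqa] at h1; exact_mod_cast h1
  rcases this with h | h <;> rw [h] at hxa <;> norm_num at hxa

lemma exists_small_pos {β : ℝ} (hβ : Irrational β) {ε : ℝ} (hε : 0 < ε) :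
    ∃ m n : ℤ, 0 < m ∧ 0 < (n:ℝ) - β*m ∧ (n:ℝ) - β*m < ε := by
  have hε1 : 0 < min ε 1 := lt_min hε one_pos
  obtain ⟨N, hN⟩ := exists_nat_one_div_lt hε1
  obtain ⟨j, k, hk0, _, hjk⟩ := Real.exists_int_int_abs_mul_sub_le β (Nat.succ_pos N)
  set y : ℝ := β * k - j with hy
  have hyirr : Irrational y := by
    have h1 : Irrational ((k:ℝ) * β) := hβ.intCast_mul (by exact_mod_cast hk0.ne')
    rw [mul_comm] at h1
    exact h1.sub_intCast j
  have hy1 : |y| < min ε 1 := by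
    rw [hy, mul_comm]
    have h2 : (1:ℝ)/((N:ℝ)+1+1) ≤ 1/((N:ℝ)+1) := by
      apply one_div_le_one_div_of_le <;> [positivity; linarith]
    calc |(k:ℝ)*β - j| ≤ 1/((N:ℝ)+1+1) := by
            convert hjk using 3; push_cast [Nat.succ_eq_add_one]; ring
    _ ≤ 1/((N:ℝ)+1) := h2
    _ < min ε 1 := hN
  have hyε : |y| < ε := lt_of_lt_of_le hy1 (min_le_left _ _)
  have hyne : y ≠ 0 := by simpa using hyirr.ne_int 0
  rcases lt_or_gt_of_ne hyne with hneg | hpos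
  · refine ⟨k, j, hk0, ?_, ?_⟩
    · rw [abs_of_neg hneg] at hyε; rw [hy] at hneg; linarith
    · rw [abs_of_neg hneg] at hyε; rw [hy] at hyε; linarith
  · -- y > 0 : take J = ⌊1/y⌋, m = J*k, n = J*j + 1
    have hylt1 : y < 1 := by
      have := lt_of_lt_of_le hy1 (min_le_right _ _); rwa [abs_of_pos hpos] at this
    set J : ℤ := ⌊1/y⌋ with hJ
    have hinv : 1 < 1/y := (one_lt_div hpos).mpr hylt1
    have hJ1 : 1 ≤ J := by
      rw [hJ]; exact_mod_cast Int.le_floor.mpr (by exact_mod_cast hinv.le)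
    have hJy : (J:ℝ) * y < 1 := by
      rcases lt_or_eq_of_le (Int.floor_le (1/y)) with h | h
      · calc (J:ℝ)*y < (1/y)*y := by
              apply mul_lt_mul_of_pos_right _ hpos; exact_mod_cast h
        _ = 1 := by field_simp
      · exfalso
        have hirr : Irrational ((J:ℝ)*y) := hyirr.intCast_mul (by omega)
        have heq : (J:ℝ) * y = 1 := by rw [hJ, h]; field_simp
        rw [heq] at hirr
        exact hirr ⟨1, by norm_num⟩
    have hJy2 : 1 < ((J:ℝ)+1) * y := by
      have := Int.lt_floor_add_one (1/y)
      calc (1:ℝ) = (1/y)*y := by field_simp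
      _ < ((J:ℝ)+1)*y := by
            apply mul_lt_mul_of_pos_right _ hpos; exact_mod_cast this
    refine ⟨J*k, J*j + 1, by positivity, ?_, ?_⟩
    · push_cast
      have : (J:ℝ)*j + 1 - β*(J*k) = 1 - J*y := by rw [hy]; ring
      rw [this]; linarith
    · push_cast
      have : (J:ℝ)*j + 1 - β*(J*k) = 1 - J*y := by rw [hy]; ring
      rw [this]
      have : 1 - (J:ℝ)*y < y := by linarith
      calc 1 - (J:ℝ)*y < y := this
      _ ≤ |y| := le_abs_self y
      _ < ε := hyε


section geom

variable {α β : ℝ}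

/-- the skew coordinate change as a homeomorphism -/
noncomputable def skewH (h : β < α) : (ℝ × ℝ) ≃ₜ (ℝ × ℝ) where
  toFun p := ((p.2 - β*p.1)/(α-β), (α*p.1 - p.2)/(α-β))
  invFun q := (q.1 + q.2, q.1*α + q.2*β)
  left_inv p := by
    have hne : α - β ≠ 0 := sub_ne_zero.mpr (ne_of_gt h)
    ext <;> (field_simp; try ring)
  right_inv q := by
    have hne : α - β ≠ 0 := sub_ne_zero.mpr (ne_of_gt h)
    ext <;> (field_simp; try ring)
  continuous_toFun := by fun_prop
  continuous_invFun := by fun_prop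

lemma Rpar_eq (h : β < α) (m n : ℤ) :
    Rpar α β m n = (skewH h) ⁻¹'
      ((Set.uIcc 0 (tcoord α β m n)) ×ˢ (Set.uIcc 0 (scoord α β m n))) := by
  have hne : α - β ≠ 0 := sub_ne_zero.mpr (ne_of_gt h)
  ext p
  constructor
  · rintro ⟨a, b, ha, hb, rfl⟩
    have h1 : (a*α + b*β - β*(a + b))/(α-β) = a := by field_simp; ring
    have h2 : (α*(a + b) - (a*α + b*β))/(α-β) = b := by field_simp; ring
    simp only [Set.mem_preimage, skewH, Homeomorph.homeomorph_mk_coe, Equiv.coe_fn_mk,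
      Set.mem_prod]
    rw [h1, h2]
    exact ⟨ha, hb⟩
  · intro hp
    simp only [Set.mem_preimage, skewH, Homeomorph.homeomorph_mk_coe, Equiv.coe_fn_mk,
      Set.mem_prod] at hp
    refine ⟨(p.2 - β*p.1)/(α-β), (α*p.1 - p.2)/(α-β), hp.1, hp.2, ?_⟩
    ext <;> simp <;> field_simp <;> ring

lemma interior_Rpar (h : β < α) (m n : ℤ) :
    interior (Rpar α β m n) = {p : ℝ × ℝ |
      (p.2 - β*p.1)/(α-β) ∈ Set.Ioo (min 0 (tcoord α β m n)) (max 0 (tcoord α β m n)) ∧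
      (α*p.1 - p.2)/(α-β) ∈ Set.Ioo (min 0 (scoord α β m n)) (max 0 (scoord α β m n))} := by
  rw [Rpar_eq h, ← Homeomorph.preimage_interior, interior_prod_eq]
  have e1 : interior (Set.uIcc 0 (tcoord α β m n)) =
      Set.Ioo (min 0 (tcoord α β m n)) (max 0 (tcoord α β m n)) := by
    rw [Set.uIcc, interior_Icc]
  have e2 : interior (Set.uIcc 0 (scoord α β m n)) =
      Set.Ioo (min 0 (scoord α β m n)) (max 0 (scoord α β m n)) := by
    rw [Set.uIcc, interior_Icc]
  rw [e1, e2]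
  rfl

end geom

section coords

variable {α β : ℝ}

lemma nli_iff (h : β < α) (m n : ℤ) :
    NoLatticeInterior α β m n ↔ ∀ k l : ℤ,
      ¬(tcoord α β k l ∈ Set.Ioo (min 0 (tcoord α β m n)) (max 0 (tcoord α β m n)) ∧
        scoord α β k l ∈ Set.Ioo (min 0 (scoord α β m n)) (max 0 (scoord α β m n))) := by
  constructor
  · intro H k l hkl
    refine H ((k:ℝ), (l:ℝ)) ?_ ⟨k, l, rfl⟩
    rw [interior_Rpar h]
    exact hkl
  · intro H p hp hex
    obtain ⟨k, l, rfl⟩ := hex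
    rw [interior_Rpar h] at hp
    exact H k l hp

lemma tcoord_add_scoord (h : β < α) (k l : ℤ) :
    tcoord α β k l + scoord α β k l = k := by
  have hne : α - β ≠ 0 := sub_ne_zero.mpr (ne_of_gt h)
  rw [tcoord, scoord]; field_simp; ring

lemma tcoord_scoord_lin (h : β < α) (k l : ℤ) :
    α * tcoord α β k l + β * scoord α β k l = l := by
  have hne : α - β ≠ 0 := sub_ne_zero.mpr (ne_of_gt h)
  rw [tcoord, scoord]; field_simp; ring

lemma mem_Tminus_iff (h : β < α) {x : ℝ} :
    x ∈ Tminus α β ↔ ∃ m n : ℤ, x = tcoord α β m n ∧ 0 < tcoord α β m n ∧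
      0 < scoord α β m n ∧ ∀ k l : ℤ,
        ¬(tcoord α β k l ∈ Set.Ioo 0 (tcoord α β m n) ∧
          scoord α β k l ∈ Set.Ioo 0 (scoord α β m n)) := by
  have hne : (0:ℝ) < α - β := sub_pos.mpr h
  constructor
  · rintro ⟨m, n, rfl, ht, hs, hnli⟩
    have hs' : 0 < scoord α β m n := by
      rw [scoord]; apply div_pos _ hne; linarith
    refine ⟨m, n, rfl, ht, hs', ?_⟩
    have := (nli_iff h m n).mp hnli
    intro k l hkl
    refine this k l ?_
    rwa [min_eq_left ht.le, max_eq_right ht.le, min_eq_left hs'.le, max_eq_right hs'.le]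
  · rintro ⟨m, n, rfl, ht, hs, hnli⟩
    refine ⟨m, n, rfl, ht, ?_, ?_⟩
    · rw [scoord] at hs
      have := (div_pos_iff.mp hs)
      rcases this with ⟨h1, _⟩ | ⟨_, h2⟩
      · linarith
      · linarith
    · rw [nli_iff h]
      intro k l hkl
      refine hnli k l ?_
      rwa [min_eq_left ht.le, max_eq_right ht.le, min_eq_left hs.le, max_eq_right hs.le] at hkl

lemma mem_Tplus_iff (h : β < α) {x : ℝ} :
    x ∈ Tplus α β ↔ ∃ m n : ℤ, x = tcoord α β m n ∧ 0 < tcoord α β m n ∧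
      scoord α β m n < 0 ∧ ∀ k l : ℤ,
        ¬(tcoord α β k l ∈ Set.Ioo 0 (tcoord α β m n) ∧
          scoord α β k l ∈ Set.Ioo (scoord α β m n) 0) := by
  have hne : (0:ℝ) < α - β := sub_pos.mpr h
  constructor
  · rintro ⟨m, n, rfl, ht, hs, hnli⟩
    have hs' : scoord α β m n < 0 := by
      rw [scoord]; apply div_neg_of_neg_of_pos _ hne; linarith
    refine ⟨m, n, rfl, ht, hs', ?_⟩
    have := (nli_iff h m n).mp hnli
    intro k l hkl
    refine this k l ?_
    rwa [min_eq_left ht.le, max_eq_right ht.le, min_eq_right hs'.le, max_eq_left hs'.le]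
  · rintro ⟨m, n, rfl, ht, hs, hnli⟩
    refine ⟨m, n, rfl, ht, ?_, ?_⟩
    · rw [scoord] at hs
      have := (div_neg_iff.mp hs)
      rcases this with ⟨_, h2⟩ | ⟨h1, _⟩
      · linarith
      · linarith
    · rw [nli_iff h]
      intro k l hkl
      refine hnli k l ?_
      rwa [min_eq_left ht.le, max_eq_right ht.le, min_eq_right hs.le, max_eq_left hs.le] at hkl

lemma coord_scale (h : β < α) {e f g h' ν ξ : ℝ}
    (h1 : e + f*α = ν) (h2 : g + h'*α = ν*α) (h3 : e + f*β = ξ) (h4 : g + h'*β = ξ*β)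
    (k l k' l' : ℤ) (hk : (k':ℝ) = e*k + f*l) (hl : (l':ℝ) = g*k + h'*l) :
    tcoord α β k' l' = ν * tcoord α β k l ∧ scoord α β k' l' = ξ * scoord α β k l := by
  have hne : α - β ≠ 0 := sub_ne_zero.mpr (ne_of_gt h)
  have hf : f*(α-β) = ν - ξ := by linear_combination h1 - h3
  have hh : h'*(α-β) = ν*α - ξ*β := by linear_combination h2 - h4
  have he : e*(α-β) = ξ*α - ν*β := by linear_combination α*h3 - β*h1
  have hg : g*(α-β) = α*β*(ξ-ν) := by linear_combination α*h4 - β*h2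
  have key1 : (g*(k:ℝ) + h'*(l:ℝ)) - β*(e*(k:ℝ) + f*(l:ℝ)) = ν*((l:ℝ) - β*k) := by
    have h5 : ((g*(k:ℝ) + h'*(l:ℝ)) - β*(e*(k:ℝ) + f*(l:ℝ)) - ν*((l:ℝ) - β*k)) * (α-β) = 0 := by
      linear_combination (k:ℝ)*hg - β*(k:ℝ)*he + (l:ℝ)*hh - β*(l:ℝ)*hf
    have := (mul_eq_zero.mp h5).resolve_right hne
    linarith
  have key2 : α*(e*(k:ℝ) + f*(l:ℝ)) - (g*(k:ℝ) + h'*(l:ℝ)) = ξ*(α*(k:ℝ) - l) := by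
    have h5 : (α*(e*(k:ℝ) + f*(l:ℝ)) - (g*(k:ℝ) + h'*(l:ℝ)) - ξ*(α*(k:ℝ) - l)) * (α-β) = 0 := by
      linear_combination α*(k:ℝ)*he - (k:ℝ)*hg + α*(l:ℝ)*hf - (l:ℝ)*hh
    have := (mul_eq_zero.mp h5).resolve_right hne
    linarith
  constructor
  · rw [tcoord, tcoord, hk, hl, key1, mul_div_assoc]
  · rw [scoord, scoord, hk, hl, key2, mul_div_assoc]

end coords

section scale

variable {α β lam mu : ℝ}

/-- scaling a `Tminus` element by `lam`, given lattice maps scaling coordinates. -/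
lemma Tminus_smul (h : β < α) (hlam0 : 0 < lam) (hmu0 : 0 < mu) (hlm : lam * mu = 1)
    (F G : ℤ → ℤ → ℤ × ℤ)
    (hF : ∀ k l : ℤ, tcoord α β (F k l).1 (F k l).2 = lam * tcoord α β k l ∧
      scoord α β (F k l).1 (F k l).2 = mu * scoord α β k l)
    (hG : ∀ k l : ℤ, tcoord α β (G k l).1 (G k l).2 = mu * tcoord α β k l ∧
      scoord α β (G k l).1 (G k l).2 = lam * scoord α β k l)
    {x : ℝ} (hx : x ∈ Tminus α β) : lam * x ∈ Tminus α β := by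
  rw [mem_Tminus_iff h] at hx ⊢
  obtain ⟨m, n, rfl, ht, hs, hnli⟩ := hx
  refine ⟨(F m n).1, (F m n).2, ((hF m n).1).symm ▸ rfl, ?_, ?_, ?_⟩
  · rw [(hF m n).1]; positivity
  · rw [(hF m n).2]; positivity
  · intro k l hkl
    rw [(hF m n).1, (hF m n).2] at hkl
    refine hnli (G k l).1 (G k l).2 ⟨?_, ?_⟩
    · rw [(hG k l).1]
      constructor
      · have := hkl.1.1; positivity
      · have h2 := hkl.1.2
        have : mu * tcoord α β k l < mu * (lam * tcoord α β m n) :=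
          mul_lt_mul_of_pos_left h2 hmu0
        calc mu * tcoord α β k l < mu * (lam * tcoord α β m n) := this
        _ = tcoord α β m n := by rw [← mul_assoc, mul_comm mu lam, hlm, one_mul]
    · rw [(hG k l).2]
      constructor
      · have := hkl.2.1; positivity
      · have h2 := hkl.2.2
        calc lam * scoord α β k l < lam * (mu * scoord α β m n) :=
              mul_lt_mul_of_pos_left h2 hlam0
        _ = scoord α β m n := by rw [← mul_assoc, hlm, one_mul]

lemma Tplus_smul (h : β < α) (hlam0 : 0 < lam) (hmu0 : 0 < mu) (hlm : lam * mu = 1)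
    (F G : ℤ → ℤ → ℤ × ℤ)
    (hF : ∀ k l : ℤ, tcoord α β (F k l).1 (F k l).2 = lam * tcoord α β k l ∧
      scoord α β (F k l).1 (F k l).2 = mu * scoord α β k l)
    (hG : ∀ k l : ℤ, tcoord α β (G k l).1 (G k l).2 = mu * tcoord α β k l ∧
      scoord α β (G k l).1 (G k l).2 = lam * scoord α β k l)
    {x : ℝ} (hx : x ∈ Tplus α β) : lam * x ∈ Tplus α β := by
  rw [mem_Tplus_iff h] at hx ⊢
  obtain ⟨m, n, rfl, ht, hs, hnli⟩ := hx
  refine ⟨(F m n).1, (F m n).2, ((hF m n).1).symm ▸ rfl, ?_, ?_, ?_⟩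
  · rw [(hF m n).1]; positivity
  · rw [(hF m n).2]
    exact mul_neg_of_pos_of_neg hmu0 hs
  · intro k l hkl
    rw [(hF m n).1, (hF m n).2] at hkl
    refine hnli (G k l).1 (G k l).2 ⟨?_, ?_⟩
    · rw [(hG k l).1]
      constructor
      · have := hkl.1.1; positivity
      · have h2 := hkl.1.2
        calc mu * tcoord α β k l < mu * (lam * tcoord α β m n) :=
              mul_lt_mul_of_pos_left h2 hmu0
        _ = tcoord α β m n := by rw [← mul_assoc, mul_comm mu lam, hlm, one_mul]
    · rw [(hG k l).2]
      constructor
      · have h2 := hkl.2.1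
        calc scoord α β m n = lam * (mu * scoord α β m n) := by
              rw [← mul_assoc, hlm, one_mul]
        _ < lam * scoord α β k l := mul_lt_mul_of_pos_left h2 hlam0
      · have h2 := hkl.2.2
        have : lam * scoord α β k l < lam * 0 := mul_lt_mul_of_pos_left h2 hlam0
        simpa using this

end scale

section finite

variable {α β : ℝ}

/-- lattice points with coordinates in a bounded box form a finite set -/
lemma finite_coord_box (h : β < α) (t1 t2 s1 s2 : ℝ) :
    {p : ℤ × ℤ | tcoord α β p.1 p.2 ∈ Set.Icc t1 t2 ∧
      scoord α β p.1 p.2 ∈ Set.Icc s1 s2}.Finite := by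
  set M : ℝ := |α| * (|t1| + |t2|) + |β| * (|s1| + |s2|) with hM
  apply Set.Finite.subset (Set.finite_Icc (⌈t1 + s1⌉, ⌈-M⌉) (⌊t2 + s2⌋, ⌊M⌋))
  rintro ⟨k, l⟩ ⟨⟨ht1, ht2⟩, ⟨hs1, hs2⟩⟩
  have hk : tcoord α β k l + scoord α β k l = k := tcoord_add_scoord h k l
  have hl : α * tcoord α β k l + β * scoord α β k l = l := tcoord_scoord_lin h k l
  have htabs : |tcoord α β k l| ≤ |t1| + |t2| := by
    rw [abs_le]; constructor
    · have := neg_abs_le t1; linarith [abs_nonneg t2]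
    · have := le_abs_self t2; linarith [abs_nonneg t1]
  have hsabs : |scoord α β k l| ≤ |s1| + |s2| := by
    rw [abs_le]; constructor
    · have := neg_abs_le s1; linarith [abs_nonneg s2]
    · have := le_abs_self s2; linarith [abs_nonneg s1]
  have hlabs : |(l:ℝ)| ≤ M := by
    rw [← hl, hM]
    calc |α * tcoord α β k l + β * scoord α β k l|
        ≤ |α * tcoord α β k l| + |β * scoord α β k l| := abs_add_le _ _
    _ = |α| * |tcoord α β k l| + |β| * |scoord α β k l| := by rw [abs_mul, abs_mul]
    _ ≤ |α| * (|t1| + |t2|) + |β| * (|s1| + |s2|) := by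
          apply add_le_add <;> apply mul_le_mul_of_nonneg_left <;>
            first | assumption | exact abs_nonneg _
  constructor
  · constructor
    · exact Int.ceil_le.mpr (by rw [← hk]; exact add_le_add ht1 hs1)
    · exact Int.ceil_le.mpr (by rw [abs_le] at hlabs; exact hlabs.1)
  · constructor
    · exact Int.le_floor.mpr (by rw [← hk]; exact add_le_add ht2 hs2)
    · exact Int.le_floor.mpr (by rw [abs_le] at hlabs; exact hlabs.2)

end finite

section locfin

variable {α β : ℝ}

lemma finite_Tminus_Icc (h : β < α) (hβirr : Irrational β) (a b : ℝ) (ha : 0 < a) :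
    (Tminus α β ∩ Set.Icc a b).Finite := by
  have hd : (0:ℝ) < α - β := sub_pos.mpr h
  set ε : ℝ := min (a * (α - β)) (α - β) with hε
  have hε0 : 0 < ε := lt_min (by positivity) hd
  obtain ⟨mQ, nQ, hmQ, hQ1, hQ2⟩ := exists_small_pos hβirr hε0
  set tQ : ℝ := tcoord α β mQ nQ with htQ
  set sQ : ℝ := scoord α β mQ nQ with hsQ
  have htQ0 : 0 < tQ := by rw [htQ, tcoord]; positivity
  have htQa : tQ < a := by
    rw [htQ, tcoord, div_lt_iff₀ hd]
    calc (nQ:ℝ) - β * mQ < ε := hQ2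
    _ ≤ a * (α - β) := min_le_left _ _
  have hsQ0 : 0 < sQ := by
    rw [hsQ, scoord]
    apply div_pos _ hd
    have h1 : (nQ:ℝ) - β * mQ < α - β := lt_of_lt_of_le hQ2 (min_le_right _ _)
    have h2 : (1:ℝ) ≤ (mQ:ℝ) := by exact_mod_cast hmQ
    nlinarith
  apply Set.Finite.subset
    (Set.Finite.image (fun p : ℤ × ℤ => tcoord α β p.1 p.2) (finite_coord_box h a b 0 sQ))
  rintro x ⟨hxT, hxa, hxb⟩
  rw [mem_Tminus_iff h] at hxT
  obtain ⟨m, n, rfl, ht, hs, hnli⟩ := hxT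
  have hsle : scoord α β m n ≤ sQ := by
    by_contra hcon
    push_neg at hcon
    exact hnli mQ nQ ⟨⟨htQ0, lt_of_lt_of_le htQa hxa⟩, ⟨hsQ0, hcon⟩⟩
  exact ⟨(m, n), ⟨⟨hxa, hxb⟩, ⟨hs.le, hsle⟩⟩, rfl⟩

lemma finite_Tplus_Icc (h : β < α) (hβirr : Irrational β) (a b : ℝ) (ha : 0 < a) :
    (Tplus α β ∩ Set.Icc a b).Finite := by
  have hd : (0:ℝ) < α - β := sub_pos.mpr h
  set ε : ℝ := min (a * (α - β)) (α - β) with hε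
  have hε0 : 0 < ε := lt_min (by positivity) hd
  obtain ⟨mQ', nQ, hmQ, hQ1, hQ2⟩ := exists_small_pos hβirr.neg hε0
  -- here 0 < nQ - (-β)*mQ' < ε, i.e. 0 < nQ + β*mQ' < ε ; take mQ = -mQ'
  set mQ : ℤ := -mQ' with hmQdef
  have hcast : ((nQ:ℝ)) - β * (mQ:ℝ) = (nQ:ℝ) - (-β) * (mQ':ℝ) := by
    rw [hmQdef]; push_cast; ring
  set tQ : ℝ := tcoord α β mQ nQ with htQ
  set sQ : ℝ := scoord α β mQ nQ with hsQ
  have htQ0 : 0 < tQ := by rw [htQ, tcoord, hcast]; positivity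
  have htQa : tQ < a := by
    rw [htQ, tcoord, div_lt_iff₀ hd, hcast]
    calc (nQ:ℝ) - (-β) * mQ' < ε := hQ2
    _ ≤ a * (α - β) := min_le_left _ _
  have hsQ0 : sQ < 0 := by
    rw [hsQ, scoord]
    apply div_neg_of_neg_of_pos _ hd
    have h2 : (1:ℝ) ≤ (mQ':ℝ) := by exact_mod_cast hmQ
    have : (mQ:ℝ) = -(mQ':ℝ) := by rw [hmQdef]; push_cast; ring
    rw [this]
    nlinarith [hQ1]
  apply Set.Finite.subset
    (Set.Finite.image (fun p : ℤ × ℤ => tcoord α β p.1 p.2) (finite_coord_box h a b sQ 0))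
  rintro x ⟨hxT, hxa, hxb⟩
  rw [mem_Tplus_iff h] at hxT
  obtain ⟨m, n, rfl, ht, hs, hnli⟩ := hxT
  have hsle : sQ ≤ scoord α β m n := by
    by_contra hcon
    push_neg at hcon
    exact hnli mQ nQ ⟨⟨htQ0, lt_of_lt_of_le htQa hxa⟩, ⟨hcon, hsQ0⟩⟩
  exact ⟨(m, n), ⟨⟨hxa, hxb⟩, ⟨hsle, hs.le⟩⟩, rfl⟩

end locfin

section nonempty

variable {α β : ℝ}

lemma nonempty_Tminus (h : β < α) : (Tminus α β).Nonempty := by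
  have hd : (0:ℝ) < α - β := sub_pos.mpr h
  set m0 : ℤ := ⌊1/(α-β)⌋ + 1 with hm0
  have hm0R : 1/(α-β) < (m0:ℝ) := by rw [hm0]; push_cast; exact Int.lt_floor_add_one _
  have hm0pos : 0 < (m0:ℝ) := lt_trans (by positivity) hm0R
  set n0 : ℤ := ⌊β * (m0:ℝ)⌋ + 1 with hn0
  have ht00 : 0 < (n0:ℝ) - β * m0 := by
    rw [hn0]; push_cast
    have := Int.lt_floor_add_one (β * (m0:ℝ)); linarith
  have ht01 : (n0:ℝ) - β * m0 ≤ 1 := by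
    rw [hn0]; push_cast
    have := Int.floor_le (β * (m0:ℝ)); linarith
  have hs00 : 0 < α * (m0:ℝ) - n0 := by
    have h1 : (1:ℝ) < m0 * (α - β) := (div_lt_iff₀ hd).mp hm0R
    nlinarith
  set t0 : ℝ := tcoord α β m0 n0 with ht0
  set s0 : ℝ := scoord α β m0 n0 with hs0
  have ht0pos : 0 < t0 := by rw [ht0, tcoord]; positivity
  have hs0pos : 0 < s0 := by rw [hs0, scoord]; positivity
  set F : Set (ℤ × ℤ) := {p | tcoord α β p.1 p.2 ∈ Set.Ioc 0 t0 ∧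
    scoord α β p.1 p.2 ∈ Set.Ioc 0 s0} with hF
  have hFfin : F.Finite := by
    apply Set.Finite.subset (finite_coord_box h 0 t0 0 s0)
    rintro ⟨k, l⟩ ⟨⟨h1, h2⟩, ⟨h3, h4⟩⟩
    exact ⟨⟨h1.le, h2⟩, ⟨h3.le, h4⟩⟩
  have hFne : F.Nonempty := ⟨(m0, n0), ⟨⟨ht0pos, le_refl _⟩, ⟨hs0pos, le_refl _⟩⟩⟩
  obtain ⟨⟨m, n⟩, hmem, hmin⟩ :=
    Set.exists_min_image F (fun p => scoord α β p.1 p.2) hFfin hFne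
  refine ⟨tcoord α β m n, (mem_Tminus_iff h).mpr ⟨m, n, rfl, hmem.1.1, hmem.2.1, ?_⟩⟩
  intro k l hkl
  have hklF : (k, l) ∈ F := ⟨⟨hkl.1.1, le_trans hkl.1.2.le hmem.1.2⟩,
    ⟨hkl.2.1, le_trans hkl.2.2.le hmem.2.2⟩⟩
  have := hmin (k, l) hklF
  exact absurd hkl.2.2 (not_lt.mpr this)

lemma nonempty_Tplus (h : β < α) : (Tplus α β).Nonempty := by
  have hd : (0:ℝ) < α - β := sub_pos.mpr h
  set t0 : ℝ := tcoord α β 0 1 with ht0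
  set s0 : ℝ := scoord α β 0 1 with hs0
  have ht0pos : 0 < t0 := by
    rw [ht0, tcoord]; push_cast; rw [mul_zero, sub_zero]; positivity
  have hs0neg : s0 < 0 := by
    rw [hs0, scoord]; push_cast; rw [mul_zero, zero_sub]
    apply div_neg_of_neg_of_pos _ hd; norm_num
  set F : Set (ℤ × ℤ) := {p | tcoord α β p.1 p.2 ∈ Set.Ioc 0 t0 ∧
    scoord α β p.1 p.2 ∈ Set.Ico s0 0} with hF
  have hFfin : F.Finite := by
    apply Set.Finite.subset (finite_coord_box h 0 t0 s0 0)
    rintro ⟨k, l⟩ ⟨⟨h1, h2⟩, ⟨h3, h4⟩⟩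
    exact ⟨⟨h1.le, h2⟩, ⟨h3, h4.le⟩⟩
  have hFne : F.Nonempty := ⟨(0, 1), ⟨⟨ht0pos, le_refl _⟩, ⟨le_refl _, hs0neg⟩⟩⟩
  obtain ⟨⟨m, n⟩, hmem, hmax⟩ :=
    Set.exists_max_image F (fun p => scoord α β p.1 p.2) hFfin hFne
  refine ⟨tcoord α β m n, (mem_Tplus_iff h).mpr ⟨m, n, rfl, hmem.1.1, hmem.2.2, ?_⟩⟩
  intro k l hkl
  have hklF : (k, l) ∈ F := ⟨⟨hkl.1.1, le_trans hkl.1.2.le hmem.1.2⟩,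
    ⟨le_trans hmem.2.1 hkl.2.1.le, hkl.2.2⟩⟩
  have := hmax (k, l) hklF
  exact absurd hkl.2.1 (not_lt.mpr this)

end nonempty

section orderiso

lemma orderIso_int_of_set (S : Set ℝ) (hne : S.Nonempty) (hpos : ∀ x ∈ S, (0:ℝ) < x)
    (hfin : ∀ a b : ℝ, 0 < a → (S ∩ Set.Icc a b).Finite)
    (hlt : ∀ x ∈ S, ∃ y ∈ S, y < x) (hgt : ∀ x ∈ S, ∃ y ∈ S, x < y) :
    Nonempty (↥S ≃o ℤ) := by
  haveI : Nonempty ↥S := hne.to_subtype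
  haveI : LocallyFiniteOrder ↥S := by
    apply LocallyFiniteOrder.ofFiniteIcc
    intro a b
    have heq : (Set.Icc a b : Set ↥S) = Subtype.val ⁻¹' (S ∩ Set.Icc (a:ℝ) (b:ℝ)) := by
      ext x
      simp only [Set.mem_Icc, Set.mem_preimage, Set.mem_inter_iff, Subtype.coe_prop, true_and]
      exact ⟨fun ⟨h1, h2⟩ => ⟨h1, h2⟩, fun ⟨h1, h2⟩ => ⟨h1, h2⟩⟩
    rw [heq]
    exact (hfin a b (hpos a a.2)).preimage (Subtype.val_injective.injOn)
  haveI : NoMaxOrder ↥S := by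
    constructor
    intro x
    obtain ⟨y, hy, hxy⟩ := hgt x x.2
    exact ⟨⟨y, hy⟩, hxy⟩
  haveI : NoMinOrder ↥S := by
    constructor
    intro x
    obtain ⟨y, hy, hxy⟩ := hlt x x.2
    exact ⟨⟨y, hy⟩, hxy⟩
  letI i1 : SuccOrder ↥S := LinearLocallyFiniteOrder.succOrder ↥S
  letI i2 : PredOrder ↥S := LinearLocallyFiniteOrder.predOrder ↥S
  letI i3 : IsSuccArchimedean ↥S := inferInstance
  exact ⟨orderIsoIntOfLinearSuccPredArch⟩

end orderiso


/-- Each of the ordered sets `T⁻`, `T⁺` and `T = T⁺ ∪ T⁻`, with the order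
induced from `ℝ`, is order-isomorphic to `(ℤ, ≤)`. -/
theorem stmt8 (A : Matrix (Fin 2) (Fin 2) ℤ) (hdet : A.det = 1)
    (lam mu α β : ℝ)
    (hlam0 : 0 < lam) (hlam1 : lam < 1) (hmu : 1 < mu)
    (hAα0 : (A 0 0 : ℝ) + A 0 1 * α = lam)
    (hAα1 : (A 1 0 : ℝ) + A 1 1 * α = lam * α)
    (hAβ0 : (A 0 0 : ℝ) + A 0 1 * β = mu)
    (hAβ1 : (A 1 0 : ℝ) + A 1 1 * β = mu * β)
    (hβα : β < α) (hα : 0 < α) :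
    Nonempty (↥(Tminus α β) ≃o ℤ) ∧ Nonempty (↥(Tplus α β) ≃o ℤ) ∧
      Nonempty (↥(Tset α β) ≃o ℤ) := by
  have hd : (0:ℝ) < α - β := sub_pos.mpr hβα
  have hdne : α - β ≠ 0 := ne_of_gt hd
  set a : ℝ := (A 0 0 : ℝ) with ha
  set b : ℝ := (A 0 1 : ℝ) with hb
  set c : ℝ := (A 1 0 : ℝ) with hc
  set d : ℝ := (A 1 1 : ℝ) with hdd
  have hmu0 : (0:ℝ) < mu := lt_trans one_pos hmu
  have hdetR : a*d - b*c = 1 := by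
    rw [ha, hb, hc, hdd]
    rw [Matrix.det_fin_two] at hdet
    push_cast
    exact_mod_cast congrArg (fun z : ℤ => (z:ℝ)) hdet
  -- lam * mu = 1
  have hlm : lam * mu = 1 := by
    have h5 : (lam*mu - (a*d - b*c)) * (β - α) = 0 := by
      linear_combination mu*hAα1 - lam*hAβ1 - c*hAα0 + c*hAβ0 - d*β*hAα0 + d*α*hAβ0
    rw [hdetR] at h5
    have := (mul_eq_zero.mp h5).resolve_right (by intro h0; apply hdne; linarith)
    linarith
  -- A 0 1 ≠ 0
  have hbne : b ≠ 0 := by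
    intro h0
    rw [h0] at hAα0 hAβ0
    simp at hAα0 hAβ0
    have : lam = mu := by linarith
    linarith
  -- mu is a quadratic irrational
  have hq : mu^2 - ((A 0 0 + A 1 1 : ℤ):ℝ)*mu + 1 = 0 := by
    have h5 : b*(mu^2 - (a+d)*mu + (a*d - b*c)) = 0 := by
      linear_combination (-(b*(mu - d)))*hAβ0 + (-(b^2))*hAβ1
    rw [hdetR] at h5
    have h6 := (mul_eq_zero.mp h5).resolve_left hbne
    push_cast
    rw [ha, hdd] at h6
    linarith
  have hmuirr : Irrational mu := quad_irrational hq hmu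
  have hβirr : Irrational β := by
    rintro ⟨r, hr⟩
    exact hmuirr ⟨(A 0 0 : ℚ) + (A 0 1 : ℚ) * r, by push_cast [hr]; rw [← ha, ← hb]; linarith⟩
  -- inverse matrix eigen-identities
  have h6 : lam*(d - b*α) = 1 := by
    linear_combination (-(d))*hAα0 + b*hAα1 + hdetR
  have g1 : d - b*α = mu := by linear_combination mu*h6 - (d - b*α)*hlm
  have h7 : lam*(-c + a*α) = α := by
    linear_combination (-(a))*hAα1 + c*hAα0 + α*hdetR
  have g2 : -c + a*α = mu*α := by linear_combination mu*h7 - (-c + a*α)*hlm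
  have h8 : mu*(d - b*β) = 1 := by
    linear_combination (-(d))*hAβ0 + b*hAβ1 + hdetR
  have g3 : d - b*β = lam := by linear_combination lam*h8 - (d - b*β)*hlm
  have h9 : mu*(-c + a*β) = β := by
    linear_combination (-(a))*hAβ1 + c*hAβ0 + β*hdetR
  have g4 : -c + a*β = lam*β := by linear_combination lam*h9 - (-c + a*β)*hlm
  -- the lattice maps
  set F : ℤ → ℤ → ℤ × ℤ := fun k l => (A 0 0 * k + A 0 1 * l, A 1 0 * k + A 1 1 * l) with hFdef
  set G : ℤ → ℤ → ℤ × ℤ := fun k l => (A 1 1 * k - A 0 1 * l, -(A 1 0) * k + A 0 0 * l)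
    with hGdef
  have hF : ∀ k l : ℤ, tcoord α β (F k l).1 (F k l).2 = lam * tcoord α β k l ∧
      scoord α β (F k l).1 (F k l).2 = mu * scoord α β k l := by
    intro k l
    exact coord_scale hβα hAα0 hAα1 hAβ0 hAβ1 k l (F k l).1 (F k l).2
      (by rw [hFdef]; push_cast; ring) (by rw [hFdef]; push_cast; ring)
  have hG : ∀ k l : ℤ, tcoord α β (G k l).1 (G k l).2 = mu * tcoord α β k l ∧
      scoord α β (G k l).1 (G k l).2 = lam * scoord α β k l := by
    intro k l
    have e1 : d + (-b)*α = mu := by linarith [g1]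
    have e2 : -c + a*α = mu*α := g2
    have e3 : d + (-b)*β = lam := by linarith [g3]
    have e4 : -c + a*β = lam*β := g4
    exact coord_scale hβα e1 e2 e3 e4 k l (G k l).1 (G k l).2
      (by rw [hGdef]; push_cast; ring) (by rw [hGdef]; push_cast; ring)
  have hlmswap : mu * lam = 1 := by rw [mul_comm]; exact hlm
  -- scaling closures
  have hMdown : ∀ x ∈ Tminus α β, lam * x ∈ Tminus α β :=
    fun x hx => Tminus_smul hβα hlam0 hmu0 hlm F G hF hG hx
  have hMup : ∀ x ∈ Tminus α β, mu * x ∈ Tminus α β :=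
    fun x hx => Tminus_smul hβα hmu0 hlam0 hlmswap G F hG hF hx
  have hPdown : ∀ x ∈ Tplus α β, lam * x ∈ Tplus α β :=
    fun x hx => Tplus_smul hβα hlam0 hmu0 hlm F G hF hG hx
  have hPup : ∀ x ∈ Tplus α β, mu * x ∈ Tplus α β :=
    fun x hx => Tplus_smul hβα hmu0 hlam0 hlmswap G F hG hF hx
  have hMpos : ∀ x ∈ Tminus α β, (0:ℝ) < x := by
    rintro x ⟨m, n, _, hx, _, _⟩; exact hx
  have hPpos : ∀ x ∈ Tplus α β, (0:ℝ) < x := by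
    rintro x ⟨m, n, _, hx, _, _⟩; exact hx
  refine ⟨?_, ?_, ?_⟩
  · apply orderIso_int_of_set _ (nonempty_Tminus hβα) hMpos
      (finite_Tminus_Icc hβα hβirr)
    · intro x hx
      exact ⟨lam * x, hMdown x hx, mul_lt_of_lt_one_left (hMpos x hx) hlam1⟩
    · intro x hx
      exact ⟨mu * x, hMup x hx, lt_mul_of_one_lt_left (hMpos x hx) hmu⟩
  · apply orderIso_int_of_set _ (nonempty_Tplus hβα) hPpos
      (finite_Tplus_Icc hβα hβirr)
    · intro x hx
      exact ⟨lam * x, hPdown x hx, mul_lt_of_lt_one_left (hPpos x hx) hlam1⟩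
    · intro x hx
      exact ⟨mu * x, hPup x hx, lt_mul_of_one_lt_left (hPpos x hx) hmu⟩
  · have hTpos : ∀ x ∈ Tset α β, (0:ℝ) < x := by
      rintro x (hx | hx)
      exacts [hPpos x hx, hMpos x hx]
    apply orderIso_int_of_set _ ((nonempty_Tplus hβα).mono Set.subset_union_left) hTpos
    · intro u v hu
      show ((Tplus α β ∪ Tminus α β) ∩ Set.Icc u v).Finite
      rw [Set.union_inter_distrib_right]
      exact (finite_Tplus_Icc hβα hβirr u v hu).union (finite_Tminus_Icc hβα hβirr u v hu)
    · rintro x (hx | hx)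
      · exact ⟨lam * x, Or.inl (hPdown x hx), mul_lt_of_lt_one_left (hPpos x hx) hlam1⟩
      · exact ⟨lam * x, Or.inr (hMdown x hx), mul_lt_of_lt_one_left (hMpos x hx) hlam1⟩
    · rintro x (hx | hx)
      · exact ⟨mu * x, Or.inl (hPup x hx), lt_mul_of_one_lt_left (hPpos x hx) hmu⟩
      · exact ⟨mu * x, Or.inr (hMup x hx), lt_mul_of_one_lt_left (hMpos x hx) hmu⟩
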